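/- Let n ≥ 4 be even and ω = e^{4πi/n}. The vertical-tile states |V_{mk}⟩ = |k⟩ ⊗ Σ_{j=0}^{n/2−1} ω^{jm} |j+k+1 mod n⟩, horizontal-tile states |H_{mk}⟩ = (Σ_{j=0}^{n/2−1} ω^{jm} |j+k mod n⟩) ⊗ |k⟩ (for m = 1,...,n/2−1, k = 0,...,n−1), and the stopper |F⟩ = Σ_{i,j=0}^{n−1} |i⟩ ⊗ |j⟩ form a set of n² − 2n + 1 mutually orthogonal product vectors in ℂⁿ ⊗ ℂⁿ. -/

import Mathlib

open Finset

/-- ω = e^{4πi/n}. -/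
noncomputable def gt1ω (n : ℕ) : ℂ := Complex.exp (4 * Real.pi * Complex.I / n)

/-- Vertical tile state |V_{mk}⟩ = |k⟩ ⊗ Σ_{j<n/2} ω^{jm} |j+k+1 mod n⟩. -/
noncomputable def gt1V (n m k : ℕ) : EuclideanSpace ℂ (Fin n × Fin n) :=
  WithLp.toLp 2 fun p => (if (p.1 : ℕ) = k % n then 1 else 0) *
    ∑ j ∈ range (n / 2), if (p.2 : ℕ) = (j + k + 1) % n then gt1ω n ^ (j * m) else 0

/-- Horizontal tile state |H_{mk}⟩ = (Σ_{j<n/2} ω^{jm} |j+k mod n⟩) ⊗ |k⟩. -/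
noncomputable def gt1H (n m k : ℕ) : EuclideanSpace ℂ (Fin n × Fin n) :=
  WithLp.toLp 2 fun p => (∑ j ∈ range (n / 2), if (p.1 : ℕ) = (j + k) % n then gt1ω n ^ (j * m) else 0) *
    (if (p.2 : ℕ) = k % n then 1 else 0)

/-- The stopper |F⟩ = Σ_{i,j} |i⟩ ⊗ |j⟩. -/
noncomputable def gt1F (n : ℕ) : EuclideanSpace ℂ (Fin n × Fin n) := WithLp.toLp 2 fun _ => 1

/-- Index type for GenTiles1: vertical tiles (m = 1,…,n/2−1, k = 0,…,n−1),
horizontal tiles, and the stopper. -/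
abbrev GT1Index (n : ℕ) := (Fin (n / 2 - 1) × Fin n) ⊕ ((Fin (n / 2 - 1) × Fin n) ⊕ Unit)

/-- The GenTiles1 family in ℂⁿ ⊗ ℂⁿ. -/
noncomputable def gt1 (n : ℕ) : GT1Index n → EuclideanSpace ℂ (Fin n × Fin n)
  | Sum.inl (m, k) => gt1V n ((m : ℕ) + 1) (k : ℕ)
  | Sum.inr (Sum.inl (m, k)) => gt1H n ((m : ℕ) + 1) (k : ℕ)
  | Sum.inr (Sum.inr _) => gt1F n

/-! ### Auxiliary lemmas about ω -/

lemma gt1ω_eq {n N : ℕ} (hn : n = 2 * N) :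
    gt1ω n = Complex.exp (2 * Real.pi * Complex.I / N) := by
  unfold gt1ω
  congr 1
  rw [show ((n:ℂ)) = 2 * N by push_cast [hn]; ring,
      show (4:ℂ) * Real.pi * Complex.I = 2 * (2 * Real.pi * Complex.I) by ring,
      mul_div_mul_left _ _ (two_ne_zero)]

lemma gt1ω_prim {n N : ℕ} (hn : n = 2 * N) (hN : 2 ≤ N) :
    IsPrimitiveRoot (gt1ω n) N := by
  rw [gt1ω_eq hn]
  exact Complex.isPrimitiveRoot_exp N (by omega)

lemma gt1ω_pow_N {n N : ℕ} (hn : n = 2 * N) (hN : 2 ≤ N) : gt1ω n ^ N = 1 :=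
  (gt1ω_prim hn hN).pow_eq_one

lemma gt1ω_sum_zero {n N : ℕ} (hn : n = 2 * N) (hN : 2 ≤ N) {m : ℕ} (hm : ¬ N ∣ m) :
    ∑ j ∈ range N, gt1ω n ^ (j * m) = 0 := by
  have hx : gt1ω n ^ m ≠ 1 :=
    fun h => hm (((gt1ω_prim hn hN).pow_eq_one_iff_dvd m).mp h)
  simp_rw [mul_comm _ m, pow_mul]
  rw [geom_sum_eq hx, ← pow_mul, mul_comm m N, pow_mul, gt1ω_pow_N hn hN, one_pow,
    sub_self, zero_div]

lemma gt1ω_conj {n N : ℕ} (hn : n = 2 * N) (hN : 2 ≤ N) :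
    (starRingEnd ℂ) (gt1ω n) = gt1ω n ^ (N - 1) := by
  have h1 : gt1ω n * gt1ω n ^ (N - 1) = 1 := by
    rw [← pow_succ']
    have : N - 1 + 1 = N := by omega
    rw [this, gt1ω_pow_N hn hN]
  have h2 : (starRingEnd ℂ) (gt1ω n) * gt1ω n = 1 := by
    unfold gt1ω
    rw [← Complex.exp_conj, ← Complex.exp_add]
    have : (starRingEnd ℂ) (4 * ↑Real.pi * Complex.I / ↑n) = -(4 * ↑Real.pi * Complex.I / ↑n) := by
      rw [map_div₀, map_mul, map_mul, Complex.conj_I, Complex.conj_ofReal,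
        Complex.conj_natCast, map_ofNat]
      ring
    rw [this, neg_add_cancel, Complex.exp_zero]
  calc (starRingEnd ℂ) (gt1ω n) = (starRingEnd ℂ) (gt1ω n) * (gt1ω n * gt1ω n ^ (N-1)) := by
        rw [h1, mul_one]
    _ = gt1ω n ^ (N - 1) := by rw [← mul_assoc, h2, one_mul]

lemma gt1ω_conj_pow {n N : ℕ} (hn : n = 2 * N) (hN : 2 ≤ N) (a : ℕ) :
    (starRingEnd ℂ) (gt1ω n ^ a) = gt1ω n ^ ((N - 1) * a) := by
  rw [map_pow, gt1ω_conj hn hN, ← pow_mul]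

lemma gt1ω_cross_zero {n N : ℕ} (hn : n = 2 * N) (hN : 2 ≤ N) {m m' : ℕ}
    (hm : m < N) (hm' : m' < N) (hne : m ≠ m') :
    ∑ j ∈ range N, (starRingEnd ℂ) (gt1ω n ^ (j * m)) * gt1ω n ^ (j * m') = 0 := by
  have key : ∀ j, (starRingEnd ℂ) (gt1ω n ^ (j * m)) * gt1ω n ^ (j * m')
      = gt1ω n ^ (j * ((N - 1) * m + m')) := by
    intro j
    rw [gt1ω_conj_pow hn hN, ← pow_add]
    congr 1
    ring
  simp_rw [key]
  apply gt1ω_sum_zero hn hN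
  intro hdvd
  have hdvd' : (N:ℤ) ∣ ((N:ℤ) - 1) * m + m' := by
    have := Int.natCast_dvd_natCast.mpr hdvd
    push_cast at this
    rwa [Nat.cast_sub (by omega), Nat.cast_one] at this
  have h2 : (N:ℤ) ∣ ((m':ℤ) - m) := by
    have h3 : ((m':ℤ) - m) = (((N:ℤ) - 1) * m + m') - N * m := by ring
    rw [h3]
    exact dvd_sub hdvd' ⟨m, rfl⟩
  have := Int.eq_zero_of_abs_lt_dvd h2 (by
    rw [abs_lt]; constructor <;> [push_cast; push_cast] <;> omega)
  omega

/-! ### Auxiliary sums over `Fin n` -/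

noncomputable def gtdl (n k : ℕ) (a : Fin n) : ℂ := if (a:ℕ) = k % n then 1 else 0
noncomputable def gtfs (n k m : ℕ) (a : Fin n) : ℂ :=
  ∑ j ∈ range (n / 2), if (a:ℕ) = (j + k) % n then gt1ω n ^ (j * m) else 0

lemma sum_delta_mul {n : ℕ} (hn : 0 < n) (k : ℕ) (f : Fin n → ℂ) :
    ∑ a : Fin n, (if (a:ℕ) = k % n then (1:ℂ) else 0) * f a = f ⟨k % n, Nat.mod_lt k hn⟩ := by
  rw [Fintype.sum_eq_single (⟨k % n, Nat.mod_lt k hn⟩ : Fin n)]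
  · simp
  · intro a ha
    rw [if_neg, zero_mul]
    simpa [Fin.ext_iff] using ha

lemma sum_mul_delta {n : ℕ} (hn : 0 < n) (k : ℕ) (f : Fin n → ℂ) :
    ∑ a : Fin n, f a * (if (a:ℕ) = k % n then (1:ℂ) else 0) = f ⟨k % n, Nat.mod_lt k hn⟩ := by
  rw [Fintype.sum_eq_single (⟨k % n, Nat.mod_lt k hn⟩ : Fin n)]
  · simp
  · intro a ha
    rw [if_neg, mul_zero]
    simpa [Fin.ext_iff] using ha

lemma sum_delta_const {n : ℕ} {x : ℕ} (hx : x < n) (c : ℂ) :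
    ∑ b : Fin n, (if (b:ℕ) = x then c else 0) = c := by
  rw [Fintype.sum_eq_single (⟨x, hx⟩ : Fin n)]
  · simp
  · intro a ha
    rw [if_neg]
    simpa [Fin.ext_iff] using ha

lemma sum_dd {n : ℕ} {x : ℕ} (hx : x < n) (y : ℕ) (u v : ℂ) :
    ∑ a : Fin n, (if (a:ℕ) = x then u else 0) * (if (a:ℕ) = y then v else 0)
      = if x = y then u * v else 0 := by
  rw [Fintype.sum_eq_single (⟨x, hx⟩ : Fin n)]
  · simp [mul_ite]
  · intro a ha
    rw [if_neg, zero_mul]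
    simpa [Fin.ext_iff] using ha

/-- inner product of product vectors splits. -/
lemma inner_split {n : ℕ} (A B C D : Fin n → ℂ) (X Y : EuclideanSpace ℂ (Fin n × Fin n))
    (hX : X = WithLp.toLp 2 fun p => A p.1 * B p.2) (hY : Y = WithLp.toLp 2 fun p => C p.1 * D p.2) :
    (inner ℂ X Y : ℂ)
    = (∑ a : Fin n, (starRingEnd ℂ) (A a) * C a) * (∑ b : Fin n, (starRingEnd ℂ) (B b) * D b) := by
  subst hX hY
  rw [PiLp.inner_apply, Finset.sum_mul_sum, ← Fintype.sum_prod_type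
    (fun p : Fin n × Fin n => (starRingEnd ℂ) (A p.1) * C p.1 * ((starRingEnd ℂ) (B p.2) * D p.2))]
  apply Finset.sum_congr rfl
  intro p _
  simp only [RCLike.inner_apply, map_mul]
  ring

lemma gt1V_eq (n m k : ℕ) :
    gt1V n m k = WithLp.toLp 2 fun p => gtdl n k p.1 * gtfs n (k+1) m p.2 := by
  simp only [gt1V, gtdl, gtfs, add_assoc]

lemma gt1H_eq (n m k : ℕ) :
    gt1H n m k = WithLp.toLp 2 fun p => gtfs n k m p.1 * gtdl n k p.2 := rfl

lemma gt1F_eq (n : ℕ) :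
    gt1F n = WithLp.toLp 2 fun p : Fin n × Fin n => (fun _ : Fin n => (1:ℂ)) p.1 * (fun _ : Fin n => (1:ℂ)) p.2 := by
  simp [gt1F]

lemma conj_gtdl (n k : ℕ) (a : Fin n) : (starRingEnd ℂ) (gtdl n k a) = gtdl n k a := by
  simp [gtdl, apply_ite]

lemma sum_gtdl_mul {n : ℕ} (hn : 0 < n) (k : ℕ) (f : Fin n → ℂ) :
    ∑ a : Fin n, gtdl n k a * f a = f ⟨k % n, Nat.mod_lt k hn⟩ := by
  unfold gtdl; exact sum_delta_mul hn k f

lemma sum_mul_gtdl {n : ℕ} (hn : 0 < n) (k : ℕ) (f : Fin n → ℂ) :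
    ∑ a : Fin n, f a * gtdl n k a = f ⟨k % n, Nat.mod_lt k hn⟩ := by
  unfold gtdl; exact sum_mul_delta hn k f

lemma sum_conj_dl_dl {n : ℕ} (hn0 : 0 < n) {k k' : ℕ} (hk : k < n) (hk' : k' < n)
    (hkk : k ≠ k') :
    ∑ a : Fin n, (starRingEnd ℂ) (gtdl n k a) * gtdl n k' a = 0 := by
  simp_rw [conj_gtdl]
  rw [sum_gtdl_mul hn0 k (gtdl n k')]
  show (if (k % n : ℕ) = k' % n then (1:ℂ) else 0) = 0
  rw [if_neg]
  rw [Nat.mod_eq_of_lt hk, Nat.mod_eq_of_lt hk']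
  exact hkk

lemma sum_conj_fs_fs {n : ℕ} (hn : 0 < n) (k k' m m' : ℕ) :
    ∑ a : Fin n, (starRingEnd ℂ) (gtfs n k m a) * gtfs n k' m' a
    = ∑ j ∈ range (n/2), ∑ j' ∈ range (n/2),
        if (j + k) % n = (j' + k') % n
        then (starRingEnd ℂ) (gt1ω n ^ (j*m)) * gt1ω n ^ (j'*m') else 0 := by
  unfold gtfs
  simp_rw [map_sum, apply_ite (starRingEnd ℂ), map_zero, Finset.sum_mul_sum]
  rw [Finset.sum_comm]
  apply Finset.sum_congr rfl; intro j _
  rw [Finset.sum_comm]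
  apply Finset.sum_congr rfl; intro j' _
  exact sum_dd (Nat.mod_lt _ hn) _ _ _

lemma diag_reduce {n N : ℕ} (hNn : N ≤ n) (c : ℕ) (F : ℕ → ℕ → ℂ) :
    (∑ j ∈ range N, ∑ j' ∈ range N, if (j + c) % n = (j' + c) % n then F j j' else 0)
    = ∑ j ∈ range N, F j j := by
  apply Finset.sum_congr rfl; intro j hj
  have hj' := Finset.mem_range.mp hj
  rw [Finset.sum_eq_single j]
  · rw [if_pos rfl]
  · intro j2 hj2 hne
    have hj2' := Finset.mem_range.mp hj2
    rw [if_neg]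
    intro h
    have e1 : Nat.ModEq n (j + c) (j2 + c) := h
    have e2 := Nat.ModEq.add_right_cancel' c e1
    have : j % n = j2 % n := e2
    rw [Nat.mod_eq_of_lt (by omega), Nat.mod_eq_of_lt (by omega)] at this
    exact hne this.symm
  · intro h; exact absurd hj h

lemma sum_gtfs {n : ℕ} (hn : 0 < n) (k m : ℕ) :
    ∑ b : Fin n, gtfs n k m b = ∑ j ∈ range (n/2), gt1ω n ^ (j * m) := by
  unfold gtfs
  rw [Finset.sum_comm]
  apply Finset.sum_congr rfl; intro j _
  exact sum_delta_const (Nat.mod_lt _ hn) _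

/-! ### Orthogonality lemmas -/

lemma ortho_VV {n N : ℕ} (hn : n = 2*N) (hN : 2 ≤ N) {m m' k k' : ℕ}
    (hm : m < N) (hm' : m' < N) (hk : k < n) (hk' : k' < n)
    (hne : m ≠ m' ∨ k ≠ k') :
    (inner ℂ (gt1V n m k) (gt1V n m' k') : ℂ) = 0 := by
  have hn0 : 0 < n := by omega
  have hd2 : n / 2 = N := by omega
  rw [inner_split (gtdl n k) (gtfs n (k+1) m) (gtdl n k') (gtfs n (k'+1) m') _ _
      (gt1V_eq n m k) (gt1V_eq n m' k')]
  rcases eq_or_ne k k' with rfl | hkk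
  · have hmm : m ≠ m' := by tauto
    have hzero : ∑ b : Fin n, (starRingEnd ℂ) (gtfs n (k+1) m b) * gtfs n (k+1) m' b = 0 := by
      rw [sum_conj_fs_fs hn0, hd2, diag_reduce (by omega) (k+1)]
      exact gt1ω_cross_zero hn hN hm hm' hmm
    rw [hzero, mul_zero]
  · rw [sum_conj_dl_dl hn0 hk hk' hkk, zero_mul]

lemma ortho_HH {n N : ℕ} (hn : n = 2*N) (hN : 2 ≤ N) {m m' k k' : ℕ}
    (hm : m < N) (hm' : m' < N) (hk : k < n) (hk' : k' < n)
    (hne : m ≠ m' ∨ k ≠ k') :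
    (inner ℂ (gt1H n m k) (gt1H n m' k') : ℂ) = 0 := by
  have hn0 : 0 < n := by omega
  have hd2 : n / 2 = N := by omega
  rw [inner_split (gtfs n k m) (gtdl n k) (gtfs n k' m') (gtdl n k') _ _
      (gt1H_eq n m k) (gt1H_eq n m' k')]
  rcases eq_or_ne k k' with rfl | hkk
  · have hmm : m ≠ m' := by tauto
    have hzero : ∑ a : Fin n, (starRingEnd ℂ) (gtfs n k m a) * gtfs n k m' a = 0 := by
      rw [sum_conj_fs_fs hn0, hd2, diag_reduce (by omega) k]
      exact gt1ω_cross_zero hn hN hm hm' hmm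
    rw [hzero, zero_mul]
  · rw [sum_conj_dl_dl hn0 hk hk' hkk, mul_zero]

lemma ortho_VH {n N : ℕ} (hn : n = 2*N) (hN : 2 ≤ N) (m m' k k' : ℕ) :
    (inner ℂ (gt1V n m k) (gt1H n m' k') : ℂ) = 0 := by
  have hn0 : 0 < n := by omega
  rw [inner_split (gtdl n k) (gtfs n (k+1) m) (gtfs n k' m') (gtdl n k') _ _
      (gt1V_eq n m k) (gt1H_eq n m' k')]
  simp_rw [conj_gtdl]
  rw [sum_gtdl_mul hn0 k (gtfs n k' m'),
      sum_mul_gtdl hn0 k' (fun b => (starRingEnd ℂ) (gtfs n (k+1) m b))]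
  unfold gtfs
  simp only [map_sum, apply_ite (starRingEnd ℂ), map_zero]
  rw [Finset.sum_mul_sum]
  apply Finset.sum_eq_zero; intro j hj
  apply Finset.sum_eq_zero; intro j' hj'
  have hjr := Finset.mem_range.mp hj
  have hjr' := Finset.mem_range.mp hj'
  split_ifs with h1 h2
  · exfalso
    have e1 : Nat.ModEq n (j + k') k := h1.symm
    have e2 : Nat.ModEq n (j' + (k+1)) k' := h2.symm
    have e3 : Nat.ModEq n ((j + k') + (j' + (k+1))) (k + k') := e1.add e2
    have e4 : Nat.ModEq n ((j + j' + 1) + (k + k')) (0 + (k + k')) := by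
      rw [show (j + j' + 1) + (k + k') = (j + k') + (j' + (k+1)) by ring,
          show 0 + (k + k') = k + k' by ring]
      exact e3
    have e5 := Nat.ModEq.add_right_cancel' (k + k') e4
    have hdvd : n ∣ (j + j' + 1) := (Nat.modEq_zero_iff_dvd).mp e5
    have := Nat.le_of_dvd (by omega) hdvd
    omega
  · rw [mul_zero]
  · rw [zero_mul]
  · rw [zero_mul]

lemma ortho_VF {n N : ℕ} (hn : n = 2*N) (hN : 2 ≤ N) {m : ℕ} (k : ℕ)
    (hm1 : 1 ≤ m) (hm : m < N) :
    (inner ℂ (gt1V n m k) (gt1F n) : ℂ) = 0 := by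
  have hn0 : 0 < n := by omega
  have hd2 : n / 2 = N := by omega
  rw [inner_split (gtdl n k) (gtfs n (k+1) m) (fun _ => 1) (fun _ => 1) _ _
      (gt1V_eq n m k) (gt1F_eq n)]
  have hzero : ∑ b : Fin n, (starRingEnd ℂ) (gtfs n (k+1) m b) * 1 = 0 := by
    simp_rw [mul_one]
    rw [← map_sum, sum_gtfs hn0, hd2, gt1ω_sum_zero hn hN (by
      intro hd; exact absurd (Nat.le_of_dvd (by omega) hd) (by omega)), map_zero]
  rw [hzero, mul_zero]

lemma ortho_HF {n N : ℕ} (hn : n = 2*N) (hN : 2 ≤ N) {m : ℕ} (k : ℕ)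
    (hm1 : 1 ≤ m) (hm : m < N) :
    (inner ℂ (gt1H n m k) (gt1F n) : ℂ) = 0 := by
  have hn0 : 0 < n := by omega
  have hd2 : n / 2 = N := by omega
  rw [inner_split (gtfs n k m) (gtdl n k) (fun _ => 1) (fun _ => 1) _ _
      (gt1H_eq n m k) (gt1F_eq n)]
  have hzero : ∑ a : Fin n, (starRingEnd ℂ) (gtfs n k m a) * 1 = 0 := by
    simp_rw [mul_one]
    rw [← map_sum, sum_gtfs hn0, hd2, gt1ω_sum_zero hn hN (by
      intro hd; exact absurd (Nat.le_of_dvd (by omega) hd) (by omega)), map_zero]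
  rw [hzero, zero_mul]

/-! ### Nonvanishing -/

lemma gtfs_self {n : ℕ} (hn : 2 ≤ n) (k m : ℕ) :
    gtfs n k m ⟨k % n, Nat.mod_lt k (by omega)⟩ = 1 := by
  unfold gtfs
  rw [Finset.sum_eq_single 0]
  · simp
  · intro j hj hj0
    have hjr := Finset.mem_range.mp hj
    rw [if_neg]
    intro h
    have e1 : Nat.ModEq n (j + k) (0 + k) := by rw [Nat.zero_add]; exact h.symm
    have e2 := Nat.ModEq.add_right_cancel' k e1
    have hdvd : n ∣ j := (Nat.modEq_zero_iff_dvd).mp e2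
    have := Nat.le_of_dvd (Nat.pos_of_ne_zero hj0) hdvd
    omega
  · intro h
    exact absurd (Finset.mem_range.mpr (by omega)) h

lemma gt1V_ne_zero {n : ℕ} (hn : 2 ≤ n) (m k : ℕ) : gt1V n m k ≠ 0 := by
  have h1 : gt1V n m k
      (⟨k % n, Nat.mod_lt k (by omega)⟩, ⟨(k+1) % n, Nat.mod_lt (k+1) (by omega)⟩) = 1 := by
    rw [gt1V_eq]
    show gtdl n k _ * gtfs n (k+1) m _ = 1
    rw [gtfs_self hn (k+1) m, mul_one]
    unfold gtdl
    exact if_pos rfl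
  intro h0
  rw [h0] at h1
  exact one_ne_zero h1.symm

lemma gt1H_ne_zero {n : ℕ} (hn : 2 ≤ n) (m k : ℕ) : gt1H n m k ≠ 0 := by
  have h1 : gt1H n m k
      (⟨k % n, Nat.mod_lt k (by omega)⟩, ⟨k % n, Nat.mod_lt k (by omega)⟩) = 1 := by
    rw [gt1H_eq]
    show gtfs n k m _ * gtdl n k _ = 1
    rw [gtfs_self hn k m, one_mul]
    unfold gtdl
    exact if_pos rfl
  intro h0
  rw [h0] at h1
  exact one_ne_zero h1.symm

lemma gt1F_ne_zero {n : ℕ} (hn : 2 ≤ n) : gt1F n ≠ 0 := by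
  intro h0
  have h1 : gt1F n (⟨0, by omega⟩, ⟨0, by omega⟩) = 1 := rfl
  rw [h0] at h1
  exact one_ne_zero h1.symm

/-- GenTiles1: for even n ≥ 4 the n² − 2n + 1 states above are (nonzero) mutually
orthogonal product vectors in ℂⁿ ⊗ ℂⁿ. -/
theorem stmt13 (n : ℕ) (hn4 : 4 ≤ n) (heven : Even n) :
    (∀ s t : GT1Index n, s ≠ t → (inner ℂ (gt1 n s) (gt1 n t) : ℂ) = 0) ∧
    (∀ s, gt1 n s ≠ 0) ∧
    Fintype.card (GT1Index n) = n ^ 2 - 2 * n + 1 := by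
  obtain ⟨N, hNn⟩ := heven
  have hn : n = 2 * N := by omega
  have hN : 2 ≤ N := by omega
  have hd2 : n / 2 = N := by omega
  have hmlt : ∀ m : Fin (n / 2 - 1), (m : ℕ) + 1 < N := by
    intro m; have := m.isLt; omega
  refine ⟨?_, ?_, ?_⟩
  · rintro (⟨m, k⟩ | ⟨m, k⟩ | u) (⟨m', k'⟩ | ⟨m', k'⟩ | u') hst
    · -- V V
      have hne : (m:ℕ) + 1 ≠ (m':ℕ) + 1 ∨ (k:ℕ) ≠ (k':ℕ) := by
        rcases eq_or_ne m m' with rfl | hmm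
        · rcases eq_or_ne k k' with rfl | hkk
          · exact absurd rfl hst
          · exact Or.inr (Fin.val_ne_of_ne hkk)
        · exact Or.inl (fun h => hmm (Fin.ext (by omega)))
      exact ortho_VV hn hN (hmlt m) (hmlt m') k.isLt k'.isLt hne
    · exact ortho_VH hn hN _ _ _ _
    · exact ortho_VF hn hN (m := (m:ℕ)+1) _ (by omega) (hmlt m)
    · exact inner_eq_zero_symm.mpr (ortho_VH hn hN _ _ _ _)
    · -- H H
      have hne : (m:ℕ) + 1 ≠ (m':ℕ) + 1 ∨ (k:ℕ) ≠ (k':ℕ) := by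
        rcases eq_or_ne m m' with rfl | hmm
        · rcases eq_or_ne k k' with rfl | hkk
          · exact absurd rfl hst
          · exact Or.inr (Fin.val_ne_of_ne hkk)
        · exact Or.inl (fun h => hmm (Fin.ext (by omega)))
      exact ortho_HH hn hN (hmlt m) (hmlt m') k.isLt k'.isLt hne
    · exact ortho_HF hn hN (m := (m:ℕ)+1) _ (by omega) (hmlt m)
    · refine inner_eq_zero_symm.mpr (ortho_VF hn hN (m := (m':ℕ)+1) (k':ℕ) ?_ (hmlt m'))
      omega
    · refine inner_eq_zero_symm.mpr (ortho_HF hn hN (m := (m':ℕ)+1) (k':ℕ) ?_ (hmlt m'))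
      omega
    · exact absurd rfl hst
  · rintro (⟨m, k⟩ | ⟨m, k⟩ | u)
    · exact gt1V_ne_zero (by omega) _ _
    · exact gt1H_ne_zero (by omega) _ _
    · exact gt1F_ne_zero (by omega)
  · have hcard : Fintype.card (GT1Index n) = (n/2 - 1) * n + ((n/2 - 1) * n + 1) := by
      simp [GT1Index, Fintype.card_sum, Fintype.card_prod]
    rw [hcard, hd2, Nat.sub_mul, one_mul]
    have h1 : n ^ 2 = N * n + N * n := by rw [hNn]; ring
    have h3 : n ≤ N * n := Nat.le_mul_of_pos_left n (by omega)
    omega
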